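/- Let N be a feed-forward network with layers C₀, …, C_m, let L (with functions σ^L_i and layers C'₀, …, C'_m) be a feed-forward lift of N obtained by splitting a cell c ∈ C_j (0 < j < m) into two cells c₁, c₂ of L, where |C_{j+1}| = 1, say C_{j+1} = {d}, and let ⋈ be the balanced relation on L given by c₁ ⋈ c₂. Then ⋈ is the unique balanced equivalence relation on L whose quotient equals N. -/
import Mathlib


/-- if the feed-forward lift `L` of `N` is the split of a cell
`c` of an intermediate layer `C_j` (`0 < j < m`) into two cells `c₁, c₂`, and
the next layer `C_{j+1}` of `N` is a singleton `{d}`, then the balanced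
equivalence relation identifying exactly `c₁` and `c₂` (i.e. the kernel of the
split projection `π`) is the unique balanced equivalence relation on `L` whose
quotient network is `N`. -/
theorem stmt_19 {CL CN : Type*} [Fintype CL] [Fintype CN] {k : ℕ}
    (σL : Fin k → CL → CL) (σN : Fin k → CN → CN)
    (m : ℕ) (layL : CL → ℕ) (layN : CN → ℕ)
    (hlayL : ∀ a, layL a ≤ m) (hlayN : ∀ a, layN a ≤ m)
    (hsurjL : ∀ j ≤ m, ∃ a, layL a = j) (hsurjN : ∀ j ≤ m, ∃ a, layN a = j)
    (hfixL : ∀ i a, layL a = 0 → σL i a = a)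
    (hdownL : ∀ i a j, layL a = j + 1 → layL (σL i a) = j)
    (hsourceL : ∀ a, layL a < m → ∃ a' i, layL a' = layL a + 1 ∧ σL i a' = a)
    (hfixN : ∀ i a, layN a = 0 → σN i a = a)
    (hdownN : ∀ i a j, layN a = j + 1 → layN (σN i a) = j)
    (hsourceN : ∀ a, layN a < m → ∃ a' i, layN a' = layN a + 1 ∧ σN i a' = a)
    (π : CL → CN) (hπsurj : Function.Surjective π)
    (hπcomm : ∀ i a, π (σL i a) = σN i (π a))
    (hπlay : ∀ a, layN (π a) = layL a)
    (c : CN) (c1 c2 : CL) (hne : c1 ≠ c2)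
    (hc1 : π c1 = c) (hc2 : π c2 = c)
    (hsplit : ∀ a b : CL, π a = π b → a ≠ b →
      (a = c1 ∧ b = c2) ∨ (a = c2 ∧ b = c1))
    (j : ℕ) (hj0 : 0 < j) (hjm : j < m) (hcj : layN c = j)
    (d : CN) (hd : layN d = j + 1) (hduniq : ∀ d', layN d' = j + 1 → d' = d) :
    ∀ r' : CL → CL → Prop, Equivalence r' →
      (∀ i a b, r' a b → r' (σL i a) (σL i b)) →
      (∃ ρ : CL → CN, Function.Surjective ρ ∧
        (∀ a b, r' a b ↔ ρ a = ρ b) ∧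
        ∀ i a, ρ (σL i a) = σN i (ρ a)) →
      ∀ a b, r' a b ↔ π a = π b := by
  classical
  intro r' hequiv _hbal hex
  obtain ⟨ρ, hρsurj, hker, hρcomm⟩ := hex
  -- basic layer facts for c1, c2
  have hlayc1 : layL c1 = j := by rw [← hπlay, hc1, hcj]
  have hlayc2 : layL c2 = j := by rw [← hπlay, hc2, hcj]
  -- get a direction index i₀ : Fin k
  obtain ⟨w, i₀, -, -⟩ := hsourceL c1 (by omega : layL c1 < m)
  -- a cell fixed by σN has layer 0
  have hfixN' : ∀ e, σN i₀ e = e → layN e = 0 := by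
    intro e he
    rcases h : layN e with _ | t
    · rfl
    · have h2 := hdownN i₀ e t h
      rw [he] at h2; omega
  -- layN (ρ x) ≤ layL x
  have hle : ∀ n x, layL x = n → layN (ρ x) ≤ n := by
    intro n
    induction n with
    | zero =>
      intro x hx
      have hfix : σN i₀ (ρ x) = ρ x := by rw [← hρcomm, hfixL i₀ x hx]
      exact le_of_eq (hfixN' _ hfix)
    | succ n ih =>
      intro x hx
      have h1 : layL (σL i₀ x) = n := hdownL i₀ x n hx
      have h2 := ih _ h1
      rw [hρcomm] at h2
      rcases h : layN (ρ x) with _ | t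
      · omega
      · have h3 := hdownN i₀ (ρ x) t h
        omega
  -- layer finsets
  set S : ℕ → Finset CL := fun t => Finset.univ.filter (fun x => layL x = t) with hS
  set T : ℕ → Finset CN := fun t => Finset.univ.filter (fun y => layN y = t) with hT
  have hmemS : ∀ t x, x ∈ S t ↔ layL x = t := by
    intro t x; simp [hS]
  have hmemT : ∀ t y, y ∈ T t ↔ layN y = t := by
    intro t y; simp [hT]
  -- π gives a card bijection on top layers
  have hcardm : (S m).card = (T m).card := by
    apply Finset.card_bij (fun x _ => π x)
    · intro x hx
      rw [hmemT]; rw [hmemS] at hx; rw [hπlay]; exact hx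
    · intro x hx y hy hxy
      by_contra hxy'
      rcases hsplit x y hxy hxy' with ⟨h1, h2⟩ | ⟨h1, h2⟩ <;>
      · rw [hmemS] at hx
        subst h1; omega
    · intro y hy
      obtain ⟨x, hx⟩ := hπsurj y
      refine ⟨x, ?_, hx⟩
      rw [hmemS, ← hπlay, hx]
      rw [hmemT] at hy; exact hy
  -- top layer image equality
  have hPm : (S m).image ρ = T m := by
    have hsub : T m ⊆ (S m).image ρ := by
      intro y hy
      obtain ⟨x, hx⟩ := hρsurj y
      rw [Finset.mem_image]
      refine ⟨x, ?_, hx⟩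
      rw [hmemS]
      have := hle (layL x) x rfl
      rw [hx] at this
      rw [hmemT] at hy
      have := hlayL x
      omega
    have hcard : ((S m).image ρ).card ≤ (T m).card := by
      calc ((S m).image ρ).card ≤ (S m).card := Finset.card_image_le
        _ = (T m).card := hcardm
    exact (Finset.eq_of_subset_of_card_le hsub hcard).symm
  -- downward induction: image equality on all layers from m down
  have key : ∀ u, u ≤ m → (S (m - u)).image ρ = T (m - u) := by
    intro u
    induction u with
    | zero => intro _; simpa using hPm
    | succ u ih =>
      intro hu
      have hu' : u ≤ m := by omega
      have hIH := ih hu'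
      set t := m - (u + 1) with ht
      have htm : t < m := by omega
      have hts : t + 1 = m - u := by omega
      apply Finset.Subset.antisymm
      · intro y hy
        rw [Finset.mem_image] at hy
        obtain ⟨x, hx, hxy⟩ := hy
        rw [hmemS] at hx
        obtain ⟨x', i, hx'1, hx'2⟩ := hsourceL x (by omega)
        have hx'S : x' ∈ S (t + 1) := by rw [hmemS]; omega
        have : ρ x' ∈ T (t + 1) := by
          rw [hts] at hx'S ⊢
          rw [← hIH, Finset.mem_image]
          exact ⟨x', hx'S, rfl⟩
        rw [hmemT] at this
        rw [hmemT, ← hxy, ← hx'2, hρcomm]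
        exact hdownN i (ρ x') t this
      · intro y hy
        rw [hmemT] at hy
        obtain ⟨y', i, hy'1, hy'2⟩ := hsourceN y (by omega)
        have hy'T : y' ∈ T (t + 1) := by rw [hmemT]; omega
        rw [hts, ← hIH, Finset.mem_image] at hy'T
        obtain ⟨x', hx', hxy'⟩ := hy'T
        rw [hmemS, ← hts] at hx'
        rw [Finset.mem_image]
        refine ⟨σL i x', ?_, ?_⟩
        · rw [hmemS]; exact hdownL i x' t hx'
        · rw [hρcomm, hxy', hy'2]
  have keyj : (S (j + 1)).image ρ = T (j + 1) := by
    have := key (m - (j + 1)) (by omega)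
    rwa [(by omega : m - (m - (j + 1)) = j + 1)] at this
  -- the unique layer-(j+1) cell d' of L
  obtain ⟨d', hd'⟩ := hsurjL (j + 1) (by omega)
  have hd'uniq : ∀ x, layL x = j + 1 → x = d' := by
    intro x hx
    by_contra hxd
    have hπx : π x = π d' := by
      have h1 : π x = d := hduniq _ (by rw [hπlay]; exact hx)
      have h2 : π d' = d := hduniq _ (by rw [hπlay]; exact hd')
      rw [h1, h2]
    rcases hsplit x d' hπx hxd with ⟨h1, h2⟩ | ⟨h1, h2⟩ <;> subst h1 <;> omega
  have hπd' : π d' = d := hduniq _ (by rw [hπlay]; exact hd')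
  have hρd' : ρ d' = d := by
    have : ρ d' ∈ T (j + 1) := by
      rw [← keyj, Finset.mem_image]
      exact ⟨d', by rw [hmemS]; exact hd', rfl⟩
    rw [hmemT] at this
    exact hduniq _ this
  -- ρ and π agree on layer j
  have hagree : ∀ x, layL x = j → ρ x = π x := by
    intro x hx
    obtain ⟨x', i, hx'1, hx'2⟩ := hsourceL x (by omega)
    have : x' = d' := hd'uniq x' (by omega)
    subst this
    rw [← hx'2, hρcomm, hπcomm, hρd', hπd']
  have hρc : ρ c1 = ρ c2 := by
    rw [hagree c1 hlayc1, hagree c2 hlayc2, hc1, hc2]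
  -- π restricted to {x // x ≠ c2} is a bijection onto CN
  have hcard2 : Fintype.card {x : CL // x ≠ c2} = Fintype.card CN := by
    apply Fintype.card_of_bijective (f := fun x : {x : CL // x ≠ c2} => π x.1)
    constructor
    · rintro ⟨x, hx⟩ ⟨y, hy⟩ h
      simp only at h
      ext
      by_contra hxy
      rcases hsplit x y h hxy with ⟨h1, h2⟩ | ⟨h1, h2⟩
      · exact hy h2
      · exact hx h1
    · intro y
      obtain ⟨x, hx⟩ := hπsurj y
      by_cases hx2 : x = c2
      · exact ⟨⟨c1, hne⟩, by simp only; rw [hc1, ← hc2, ← hx2, hx]⟩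
      · exact ⟨⟨x, hx2⟩, hx⟩
  -- hence ρ restricted to {x // x ≠ c2} is bijective
  have hρbij : Function.Bijective (fun x : {x : CL // x ≠ c2} => ρ x.1) := by
    rw [Fintype.bijective_iff_surjective_and_card]
    refine ⟨?_, hcard2⟩
    intro y
    obtain ⟨x, hx⟩ := hρsurj y
    by_cases hx2 : x = c2
    · exact ⟨⟨c1, hne⟩, by simp only; rw [hρc, ← hx2, hx]⟩
    · exact ⟨⟨x, hx2⟩, hx⟩
  have hρker : ∀ x y : CL, ρ x = ρ y → x ≠ y →
      (x = c1 ∧ y = c2) ∨ (x = c2 ∧ y = c1) := by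
    intro x y hxy hxy'
    by_cases hx : x = c2
    · have hy : y ≠ c2 := fun h => hxy' (hx.trans h.symm)
      have heq : (⟨c1, hne⟩ : {x : CL // x ≠ c2}) = ⟨y, hy⟩ := by
        apply hρbij.1
        simp only
        rw [hρc, ← hx, hxy]
      exact Or.inr ⟨hx, (Subtype.mk_eq_mk.mp heq).symm⟩
    · by_cases hy : y = c2
      · have heq : (⟨x, hx⟩ : {x : CL // x ≠ c2}) = ⟨c1, hne⟩ := by
          apply hρbij.1
          simp only
          rw [hxy, hy, ← hρc]
        exact Or.inl ⟨Subtype.mk_eq_mk.mp heq, hy⟩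
      · exfalso
        exact hxy' (Subtype.mk_eq_mk.mp (hρbij.1 (a₁ := ⟨x, hx⟩) (a₂ := ⟨y, hy⟩) hxy))
  -- conclusion
  intro a b
  constructor
  · intro hab
    have hab' := (hker a b).1 hab
    by_cases h : a = b
    · rw [h]
    · rcases hρker a b hab' h with ⟨h1, h2⟩ | ⟨h1, h2⟩ <;>
        subst h1 <;> subst h2 <;> rw [hc1, hc2]
  · intro hab
    by_cases h : a = b
    · subst h; exact hequiv.refl a
    · have hr12 : r' c1 c2 := (hker c1 c2).2 hρc
      rcases hsplit a b hab h with ⟨h1, h2⟩ | ⟨h1, h2⟩ <;> subst h1 <;> subst h2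
      · exact hr12
      · exact hequiv.symm hr12
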